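/- Let Z be a centered process on ℝ² with additive kernel, and let x⁽¹⁾=(a,c), x⁽²⁾=(b,c), x⁽³⁾=(a,d), x⁽⁴⁾=(b,d). Then Var[Z(x⁽⁴⁾) − Z(x⁽²⁾) − Z(x⁽³⁾) + Z(x⁽¹⁾)] = 0, i.e., Z(x⁽⁴⁾) = Z(x⁽²⁾) + Z(x⁽³⁾) − Z(x⁽¹⁾) almost surely. -/

import Mathlib

open MeasureTheory

private lemma memL2_mul_integrable {Ω : Type*} [MeasurableSpace Ω] {μ : Measure Ω}
    {f g : Ω → ℝ} (hf : MemLp f 2 μ) (hg : MemLp g 2 μ) :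
    Integrable (fun ω => f ω * g ω) μ := by
  have h : (fun ω => f ω * g ω)
      = fun ω => ((f ω + g ω) ^ 2 - f ω ^ 2 - g ω ^ 2) / 2 := by
    funext ω; ring
  rw [h]
  exact ((((hf.add hg).integrable_sq).sub hf.integrable_sq).sub
    hg.integrable_sq).div_const 2

private lemma integral_sub_sub_add {Ω : Type*} [MeasurableSpace Ω] {μ : Measure Ω}
    {f g h k : Ω → ℝ} (hf : Integrable f μ) (hg : Integrable g μ)
    (hh : Integrable h μ) (hk : Integrable k μ) :
    ∫ ω, f ω - g ω - h ω + k ω ∂μ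
      = (∫ ω, f ω ∂μ) - (∫ ω, g ω ∂μ) - (∫ ω, h ω ∂μ) + ∫ ω, k ω ∂μ := by
  rw [integral_add (f := fun ω => f ω - g ω - h ω) ((hf.sub hg).sub hh) hk,
      integral_sub (f := fun ω => f ω - g ω) (hf.sub hg) hh,
      integral_sub hf hg]

/-- For a centered process `Z` on `ℝ²` with additive kernel and rectangle points
`x⁽¹⁾=(a,c), x⁽²⁾=(b,c), x⁽³⁾=(a,d), x⁽⁴⁾=(b,d)`, the variance of
`Z(x⁽⁴⁾) − Z(x⁽²⁾) − Z(x⁽³⁾) + Z(x⁽¹⁾)` is zero, i.e.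
`Z(x⁽⁴⁾) = Z(x⁽²⁾) + Z(x⁽³⁾) − Z(x⁽¹⁾)` almost surely. -/
theorem additive_process_rectangle_relation
    {Ω : Type*} [MeasurableSpace Ω] (μ : Measure Ω) [IsProbabilityMeasure μ]
    (Z : ℝ × ℝ → Ω → ℝ) (K1 K2 : ℝ → ℝ → ℝ)
    (h1sym : ∀ s t, K1 s t = K1 t s) (h2sym : ∀ s t, K2 s t = K2 t s)
    (hL2 : ∀ x, MemLp (Z x) 2 μ)
    (hcent : ∀ x, ∫ ω, Z x ω ∂μ = 0)
    (hcov : ∀ x y : ℝ × ℝ, ∫ ω, Z x ω * Z y ω ∂μ = K1 x.1 y.1 + K2 x.2 y.2)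
    (a b c d : ℝ) :
    ProbabilityTheory.variance
        (fun ω => Z (b, d) ω - Z (b, c) ω - Z (a, d) ω + Z (a, c) ω) μ = 0 ∧
    (∀ᵐ ω ∂μ, Z (b, d) ω = Z (b, c) ω + Z (a, d) ω - Z (a, c) ω) := by
  set W : Ω → ℝ := fun ω => Z (b, d) ω - Z (b, c) ω - Z (a, d) ω + Z (a, c) ω with hWdef
  have hIz : ∀ x : ℝ × ℝ, Integrable (Z x) μ := fun x => (hL2 x).integrable one_le_two
  have hInt : ∀ x y : ℝ × ℝ, Integrable (fun ω => Z x ω * Z y ω) μ :=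
    fun x y => memL2_mul_integrable (hL2 x) (hL2 y)
  have hWmem : MemLp W 2 μ := (((hL2 _).sub (hL2 _)).sub (hL2 _)).add (hL2 _)
  have hmean : ∫ ω, W ω ∂μ = 0 := by
    simp only [hWdef]
    rw [integral_sub_sub_add (hIz _) (hIz _) (hIz _) (hIz _),
        hcent, hcent, hcent, hcent]
    ring
  have hWx : ∀ x : ℝ × ℝ, ∫ ω, W ω * Z x ω ∂μ = 0 := by
    intro x
    have heq : (fun ω => W ω * Z x ω) = fun ω =>
        Z (b, d) ω * Z x ω - Z (b, c) ω * Z x ω - Z (a, d) ω * Z x ω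
          + Z (a, c) ω * Z x ω := by
      funext ω; simp only [hWdef]; ring
    rw [heq, integral_sub_sub_add (hInt _ _) (hInt _ _) (hInt _ _) (hInt _ _),
        hcov, hcov, hcov, hcov]
    simp only []
    ring
  have hsq : ∫ ω, W ω ^ 2 ∂μ = 0 := by
    have hIWz : ∀ x : ℝ × ℝ, Integrable (fun ω => W ω * Z x ω) μ :=
      fun x => memL2_mul_integrable hWmem (hL2 x)
    have heq : (fun ω => W ω ^ 2) = fun ω =>
        W ω * Z (b, d) ω - W ω * Z (b, c) ω - W ω * Z (a, d) ω + W ω * Z (a, c) ω := by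
      funext ω; simp only [hWdef]; ring
    rw [heq, integral_sub_sub_add (hIWz _) (hIWz _) (hIWz _) (hIWz _),
        hWx, hWx, hWx, hWx]
    ring
  have hvar : ProbabilityTheory.variance W μ = 0 := by
    rw [ProbabilityTheory.variance_eq_sub hWmem]
    have : ∫ ω, (W ^ 2) ω ∂μ = ∫ ω, W ω ^ 2 ∂μ := by
      congr 1
    rw [this, hmean, hsq]
    ring
  refine ⟨hvar, ?_⟩
  have hsq0 : (fun ω => W ω ^ 2) =ᵐ[μ] 0 := by
    rw [← integral_eq_zero_iff_of_nonneg (fun ω => sq_nonneg (W ω)) hWmem.integrable_sq]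
    exact hsq
  filter_upwards [hsq0] with ω hω
  have hW0 : W ω = 0 := by
    have h2 : W ω ^ 2 = 0 := hω
    exact pow_eq_zero_iff (n := 2) (by norm_num) |>.mp h2
  simp only [hWdef] at hW0
  linarith
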